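/- Interior optimality condition (Kiefer–Wolfowitz equivalence, interior case): assume X has full rank m and w* ∈ Ω (all coordinates positive) is a global maximizer of det M(w) over Ω̄. Then x_iᵀ M(w*)^{-1} x_i = m for every i = 1,…,n. -/

import Mathlib

open Matrix Filter

/-- The information matrix `M(w) = ∑ i, w_i x_i x_iᵀ`. -/
noncomputable def Mmat {n m : ℕ} (x : Fin n → Fin m → ℝ) (w : Fin n → ℝ) :
    Matrix (Fin m) (Fin m) ℝ :=
  ∑ i, w i • Matrix.vecMulVec (x i) (x i)

lemma Mmat_apply {n m : ℕ} (x : Fin n → Fin m → ℝ) (w : Fin n → ℝ) (a b : Fin m) :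
    Mmat x w a b = ∑ j, w j * (x j a * x j b) := by
  simp [Mmat, Matrix.sum_apply, vecMulVec_apply]

lemma quad {n m : ℕ} (x : Fin n → Fin m → ℝ) (w : Fin n → ℝ) (v : Fin m → ℝ) :
    v ⬝ᵥ (Mmat x w) *ᵥ v = ∑ j, w j * (x j ⬝ᵥ v)^2 := by
  have key : ∀ a, ((Mmat x w) *ᵥ v) a = ∑ j, w j * (x j a * (x j ⬝ᵥ v)) := by
    intro a
    simp only [Matrix.mulVec, dotProduct, Mmat_apply, Finset.sum_mul, Finset.mul_sum]
    rw [Finset.sum_comm]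
    exact Finset.sum_congr rfl fun j _ => Finset.sum_congr rfl fun b _ => by ring
  have h0 : v ⬝ᵥ (Mmat x w) *ᵥ v = ∑ a, v a * ((Mmat x w) *ᵥ v) a := rfl
  rw [h0]
  simp only [key, Finset.mul_sum]
  rw [Finset.sum_comm]
  refine Finset.sum_congr rfl fun j _ => ?_
  have hS : (x j ⬝ᵥ v) = ∑ a, x j a * v a := rfl
  calc ∑ a, v a * (w j * (x j a * (x j ⬝ᵥ v)))
      = (∑ a, x j a * v a) * (w j * (x j ⬝ᵥ v)) := by
        rw [Finset.sum_mul]; exact Finset.sum_congr rfl fun a _ => by ring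
    _ = w j * (x j ⬝ᵥ v)^2 := by rw [← hS]; ring

lemma herm {n m : ℕ} (x : Fin n → Fin m → ℝ) (w : Fin n → ℝ) : (Mmat x w).IsHermitian := by
  unfold Matrix.IsHermitian
  ext a b
  simp only [Matrix.conjTranspose_apply, Mmat_apply, star_trivial]
  exact Finset.sum_congr rfl fun j _ => by ring

lemma posdef {n m : ℕ} (x : Fin n → Fin m → ℝ) (w : Fin n → ℝ) (hw : ∀ i, 0 < w i)
    (hker : ∀ v : Fin m → ℝ, (∀ j, x j ⬝ᵥ v = 0) → v = 0) : (Mmat x w).PosDef := by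
  refine Matrix.posDef_iff_dotProduct_mulVec.mpr ⟨herm x w, fun v hv => ?_⟩
  have h1 : star v ⬝ᵥ (Mmat x w) *ᵥ v = ∑ j, w j * (x j ⬝ᵥ v)^2 := by
    rw [star_trivial]; exact quad x w v
  rw [h1]
  obtain ⟨j, hj⟩ : ∃ j, x j ⬝ᵥ v ≠ 0 := by
    by_contra h
    push_neg at h
    exact hv (hker v h)
  exact Finset.sum_pos' (fun k _ => mul_nonneg (hw k).le (sq_nonneg _))
    ⟨j, Finset.mem_univ j, mul_pos (hw j) (by positivity)⟩

lemma detlem {m : ℕ} (M : Matrix (Fin m) (Fin m) ℝ) (hM : IsUnit M.det) (u : Fin m → ℝ) (s : ℝ) :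
    (M + s • vecMulVec u u).det = M.det * (1 + s * (u ⬝ᵥ M⁻¹ *ᵥ u)) := by
  have h1 : s • vecMulVec u u = vecMulVec (s • u) u := by
    ext a b; simp [vecMulVec_apply]; ring
  rw [h1, Matrix.vecMulVec_eq Unit, Matrix.det_add_replicateCol_mul_replicateRow hM]
  congr 1
  rw [Matrix.det_unique]
  simp [Matrix.mul_apply, Matrix.replicateRow_apply, Matrix.replicateCol_apply, dotProduct, Matrix.mulVec,
    Finset.mul_sum, Finset.sum_mul]
  rw [Finset.sum_comm]
  refine Finset.sum_congr rfl fun a _ => Finset.sum_congr rfl fun b _ => by ring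

lemma Mmat_pert {n m : ℕ} (x : Fin n → Fin m → ℝ) (w : Fin n → ℝ) (i : Fin n) (t : ℝ) :
    Mmat x (fun j => (1 - t) * w j + t * (Pi.single i 1 : Fin n → ℝ) j) =
      (1 - t) • Mmat x w + t • vecMulVec (x i) (x i) := by
  ext a b
  simp only [Matrix.add_apply, Matrix.smul_apply, Mmat_apply, smul_eq_mul, vecMulVec_apply]
  rw [show (∑ j, ((1 - t) * w j + t * (Pi.single i 1 : Fin n → ℝ) j) * (x j a * x j b)) =
      ∑ j, ((1 - t) * (w j * (x j a * x j b)) + t * (Pi.single i 1 : Fin n → ℝ) j * (x j a * x j b)) from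
      Finset.sum_congr rfl fun j _ => by ring,
    Finset.sum_add_distrib, ← Finset.mul_sum]
  congr 1
  rw [Finset.sum_eq_single i]
  · simp
  · intro j _ hj; simp [Pi.single_apply, hj]
  · intro h; exact absurd (Finset.mem_univ i) h

lemma detformula {n m : ℕ} (x : Fin n → Fin m → ℝ) (w : Fin n → ℝ) (i : Fin n)
    (hm : 1 ≤ m) (hM : IsUnit (Mmat x w).det) (t : ℝ) (ht : t ≠ 1) :
    (Mmat x (fun j => (1 - t) * w j + t * (Pi.single i 1 : Fin n → ℝ) j)).det =
      (Mmat x w).det * ((1 - t) ^ (m - 1) *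
        (1 + t * ((x i ⬝ᵥ (Mmat x w)⁻¹ *ᵥ x i) - 1))) := by
  have h1t : (1 : ℝ) - t ≠ 0 := sub_ne_zero.mpr (Ne.symm ht)
  set c := x i ⬝ᵥ (Mmat x w)⁻¹ *ᵥ x i with hc
  rw [Mmat_pert]
  have h2 : (1 - t) • Mmat x w + t • vecMulVec (x i) (x i) =
      (1 - t) • (Mmat x w + (t / (1 - t)) • vecMulVec (x i) (x i)) := by
    rw [smul_add, smul_smul]
    congr 2
    field_simp
  rw [h2, Matrix.det_smul, detlem _ hM, Fintype.card_fin]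
  have hpow : (1 - t) ^ m = (1 - t) ^ (m - 1) * (1 - t) := by
    rw [← pow_succ, Nat.sub_add_cancel hm]
  rw [hpow, ← hc]
  field_simp
  ring


/-- Interior optimality condition (Kiefer–Wolfowitz equivalence, interior case): if the
design matrix has full rank `m` and `w*`, with all coordinates positive and summing to 1,
is a global maximizer of `det M(w)` over the closed simplex, then
`x_iᵀ M(w*)⁻¹ x_i = m` for every `i`. -/
theorem stmt_18 {n m : ℕ} (hm : 2 ≤ m) (hnm : m ≤ n)
    (x : Fin n → Fin m → ℝ) (hrank : (Matrix.of x).rank = m)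
    (wstar : Fin n → ℝ) (hpos : ∀ i, 0 < wstar i) (hsum : ∑ i, wstar i = 1)
    (hopt : ∀ v : Fin n → ℝ, (∀ i, 0 ≤ v i) → ∑ i, v i = 1 →
      (Mmat x v).det ≤ (Mmat x wstar).det) :
    ∀ i, x i ⬝ᵥ (Mmat x wstar)⁻¹ *ᵥ x i = m := by
  have hm1 : 1 ≤ m := le_trans one_le_two hm
  -- kernel triviality from full rank
  have hker : ∀ v : Fin m → ℝ, (∀ j, x j ⬝ᵥ v = 0) → v = 0 := by
    have h1 : Module.finrank ℝ (LinearMap.range (Matrix.of x).mulVecLin) = m := hrank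
    have h2 := LinearMap.finrank_range_add_finrank_ker (Matrix.of x).mulVecLin
    rw [h1, Module.finrank_fintype_fun_eq_card, Fintype.card_fin] at h2
    have h3 : Module.finrank ℝ (LinearMap.ker (Matrix.of x).mulVecLin) = 0 := by omega
    have h4 : LinearMap.ker (Matrix.of x).mulVecLin = ⊥ := Submodule.finrank_eq_zero.mp h3
    intro v hv
    have hv0 : (Matrix.of x).mulVecLin v = 0 := by
      ext j
      simpa [Matrix.mulVecLin_apply, Matrix.mulVec, Matrix.of_apply] using hv j
    simpa using (Submodule.mem_bot ℝ).mp (h4 ▸ LinearMap.mem_ker.mpr hv0)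
  have hpd := posdef x wstar hpos hker
  have hdet : 0 < (Mmat x wstar).det := hpd.det_pos
  have hMu : IsUnit (Mmat x wstar).det := isUnit_iff_ne_zero.mpr hdet.ne'
  intro i
  set c := x i ⬝ᵥ (Mmat x wstar)⁻¹ *ᵥ x i with hc
  have hle1 : wstar i ≤ 1 := by
    rw [← hsum]
    exact Finset.single_le_sum (fun j _ => (hpos j).le) (Finset.mem_univ i)
  set ε := wstar i / 2 with hε
  have hε0 : 0 < ε := half_pos (hpos i)
  have hεle : ε ≤ 1/2 := by rw [hε]; linarith
  set g : ℝ → ℝ := fun t => (Mmat x wstar).det * ((1 - t) ^ (m - 1) * (1 + t * (c - 1)))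
    with hg
  have hloc : IsLocalMax g 0 := by
    have hmem : Set.Ioo (-ε) ε ∈ nhds (0:ℝ) := Ioo_mem_nhds (neg_lt_zero.mpr hε0) hε0
    filter_upwards [hmem] with t ht
    have ht1 : t ≠ 1 := by
      intro h; rw [h] at ht; have := ht.2; linarith
    set v : Fin n → ℝ := fun j => (1 - t) * wstar j + t * (Pi.single i 1 : Fin n → ℝ) j
      with hv
    have hv0 : ∀ j, 0 ≤ v j := by
      intro j
      rw [hv]
      by_cases hj : j = i
      · subst hj
        simp only [Pi.single_eq_same]
        have h1 := ht.1
        have h2 := ht.2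
        nlinarith [hpos j, hle1]
      · simp only [Pi.single_apply, hj, if_false, mul_zero, add_zero]
        have h2 := ht.2
        have : (0:ℝ) ≤ 1 - t := by linarith
        exact mul_nonneg this (hpos j).le
    have hv1 : ∑ j, v j = 1 := by
      simp only [hv, Finset.sum_add_distrib, ← Finset.mul_sum, hsum,
        Finset.sum_pi_single', Finset.mem_univ, if_true]
      ring
    have hle := hopt v hv0 hv1
    rw [show v = fun j => (1 - t) * wstar j + t * (Pi.single i 1 : Fin n → ℝ) j from hv,
      detformula x wstar i hm1 hMu t ht1] at hle
    have hg0 : g 0 = (Mmat x wstar).det := by simp [hg]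
    rw [hg0]
    exact hle
  have hder : HasDerivAt g ((Mmat x wstar).det * (c - m)) 0 := by
    have h1 : HasDerivAt (fun t : ℝ => 1 - t) (-1) 0 := (hasDerivAt_id 0).const_sub 1
    have h2 := h1.pow (m - 1)
    have h3 : HasDerivAt (fun t : ℝ => 1 + t * (c - 1)) (c - 1) 0 := by
      simpa using ((hasDerivAt_id (0:ℝ)).mul_const (c - 1)).const_add 1
    have h4 := (h2.mul h3).const_mul (Mmat x wstar).det
    refine h4.congr_deriv ?_
    have hcast : ((m - 1 : ℕ) : ℝ) = (m : ℝ) - 1 := by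
      push_cast [Nat.cast_sub hm1]; ring
    simp [hcast]
  have hzero := hloc.hasDerivAt_eq_zero hder
  have : c - m = 0 := by
    rcases mul_eq_zero.mp hzero with h | h
    · exact absurd h hdet.ne'
    · exact h
  linarith
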